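/- Every preferred extension of a Deductive ASPIC⊖ argumentation system is closed under strict rules: if E is a preferred extension and r : φ₀,...,φ_m → ψ is a strict rule with φ₀,...,φ_m ∈ E^C (the set of conclusions of arguments in E), then ψ ∈ E^C. -/

import Mathlib

namespace JS

inductive Lab : Type
  | IN | OUT | UNDEC
deriving DecidableEq

structure JSBAF (A : Type) where
  att : A → A → Prop
  supp : Set A → A → Prop
  pref : A → A → Prop

variable {A : Type}

/-- Strict arguments: supported by the empty set or only by strict arguments. -/
inductive Strict (J : JSBAF A) : A → Prop
  | mk (S : Set A) (a : A) (h : J.supp S a) (hS : ∀ b ∈ S, Strict J b) : Strict J a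

/-- Structural restrictions on JSBAFs. -/
structure Restr (J : JSBAF A) : Prop where
  finSupp : ∀ S b, J.supp S b → S.Finite
  uniqSupp : ∀ S S' b, J.supp S b → J.supp S' b → S = S'
  acyc : ∀ a, ¬ Relation.TransGen (fun x y => ∃ S, J.supp S y ∧ x ∈ S) a a
  strictUnatt : ∀ a b, Strict J b → ¬ J.att a b
  prefRefl : ∀ a, J.pref a a
  prefTrans : ∀ a b c, J.pref a b → J.pref b c → J.pref a c
  prefTotal : ∀ a b, J.pref a b ∨ J.pref b a
  strictEq : ∀ a b, Strict J a → Strict J b → J.pref a b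
  strictTop : ∀ a b, ¬ Strict J a → Strict J b → J.pref a b ∧ ¬ J.pref b a

def inL (L : A → Lab) : Set A := {a | L a = Lab.IN}
def outL (L : A → Lab) : Set A := {a | L a = Lab.OUT}
def undecL (L : A → Lab) : Set A := {a | L a = Lab.UNDEC}

/-- Definition 2, item 1: legally IN. -/
def legallyIn (J : JSBAF A) (L : A → Lab) (a : A) : Prop :=
  (∀ b, J.att b a → L b = Lab.OUT) ∧
  ∀ S c, J.supp S c → a ∈ S → (∀ b ∈ S, b ≠ a → J.pref a b) →
    (L c = Lab.IN ∨
     (L c = Lab.UNDEC ∧ ∃ b ∈ S, b ≠ a ∧ (L b = Lab.OUT ∨ L b = Lab.UNDEC)) ∨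
     (L c = Lab.OUT ∧
       ((∃ b ∈ S, b ≠ a ∧ L b = Lab.OUT) ∨
        (∃ b₁ ∈ S, ∃ b₂ ∈ S, b₁ ≠ a ∧ b₂ ≠ a ∧ b₁ ≠ b₂ ∧
          L b₁ = Lab.UNDEC ∧ L b₂ = Lab.UNDEC))))

/-- Definition 2, item 2: legally OUT. -/
def legallyOut (J : JSBAF A) (L : A → Lab) (a : A) : Prop :=
  (∃ b, J.att b a ∧ L b = Lab.IN) ∨
  (∃ (n : ℕ) (S : ℕ → Set A) (b : ℕ → A),
    (∀ i ≤ n, J.supp (S i) (b i)) ∧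
    (∀ i < n, b i ∈ S (i + 1)) ∧
    a ∈ S 0 ∧
    (∀ d ∈ S 0, d ≠ a → L d = Lab.IN) ∧
    (∃ c, J.att c (b n) ∧ L c = Lab.IN) ∧
    (∀ i ≤ n, L (b i) = Lab.OUT) ∧
    (∀ i, 1 ≤ i → i ≤ n → ∀ d ∈ S i, d ≠ b (i - 1) → L d = Lab.IN) ∧
    (∀ d ∈ S 0, d ≠ a → J.pref a d))

/-- Admissible labelings. -/
def Admissible (J : JSBAF A) (L : A → Lab) : Prop :=
  (∀ a, L a = Lab.IN → legallyIn J L a) ∧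
  (∀ a, L a = Lab.OUT ↔ legallyOut J L a) ∧
  (∀ a, Strict J a → L a = Lab.IN)

/-- Preferred labelings: maximal admissible w.r.t. inclusion of IN-sets. -/
def Preferred (J : JSBAF A) (L : A → Lab) : Prop :=
  Admissible J L ∧ ∀ L', Admissible J L' → ¬ (inL L ⊂ inL L')

/-- The iterated OUT-sets of the SIM labeling. -/
def simO (J : JSBAF A) : ℕ → Set A
  | 0 => {a | ∃ b, Strict J b ∧ J.att b a}
  | n + 1 => simO J n ∪
      {a | ∃ S c, J.supp S c ∧ a ∈ S ∧ c ∈ simO J n ∧ ∀ d ∈ S, d ≠ a → Strict J d}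

def simIn (J : JSBAF A) : Set A := {a | Strict J a}
def simOut (J : JSBAF A) : Set A := ⋃ n, simO J n

open Classical in
/-- The strict-including-minimal labeling. -/
noncomputable def SIM (J : JSBAF A) : A → Lab := fun a =>
  if Strict J a then Lab.IN else if a ∈ simOut J then Lab.OUT else Lab.UNDEC

/-- The order on labelings. -/
def leL (L₁ L₂ : A → Lab) : Prop := inL L₁ ⊆ inL L₂ ∧ outL L₁ ⊆ outL L₂

end JS
namespace ASPIC

/-- An underlying logical language: formulas, atoms, interpretations, a classical
negation and conjunction, and the interpolation-style assumption on syntactically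
disjoint sets of formulas. -/
structure Logic where
  F : Type
  Atom : Type
  atoms : F → Set Atom
  I : Type
  inhab : Nonempty I
  Models : I → F → Prop
  neg : F → F
  conj : F → F → F
  neg_spec : ∀ i φ, Models i (neg φ) ↔ ¬ Models i φ
  conj_spec : ∀ i φ ψ, Models i (conj φ ψ) ↔ (Models i φ ∧ Models i ψ)
  atoms_neg : ∀ φ, atoms (neg φ) = atoms φ
  atoms_conj : ∀ φ ψ, atoms (conj φ ψ) = atoms φ ∪ atoms ψ
  interp : ∀ Γ Δ : Set F, (∀ φ ∈ Γ, ∀ ψ ∈ Δ, atoms φ ∩ atoms ψ = ∅) →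
    (∃ i, ∀ φ ∈ Γ, Models i φ) → (∃ i, ∀ ψ ∈ Δ, Models i ψ) →
    (∃ i, (∀ φ ∈ Γ, Models i φ) ∧ (∀ ψ ∈ Δ, Models i ψ))

/-- The model-based consequence relation ⊨_C. -/
def Conseq (L : Logic) (Γ : Set L.F) (φ : L.F) : Prop :=
  ∀ i, (∀ ψ ∈ Γ, L.Models i ψ) → L.Models i φ

/-- φ = −ψ: one formula is the negation of the other. -/
def negOf (L : Logic) (φ ψ : L.F) : Prop := φ = L.neg ψ ∨ ψ = L.neg φ

/-- Conjunction of a nonempty list of formulas: conjL L φ [ψ₁,…] = φ ∧ ψ₁ ∧ … . -/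
def conjL (L : Logic) : L.F → List L.F → L.F
  | φ, [] => φ
  | φ, ψ :: l => L.conj φ (conjL L ψ l)

/-- A (defeasible) rule: antecedents and conclusion. -/
abbrev Rule (L : Logic) := List L.F × L.F

/-- An argumentation system of Deductive ASPIC⊖: satisfiable axioms, defeasible rules,
a (partial) naming function and a total preorder on defeasible rules.  The strict rules
are the axiomatic rules together with all consequence-based rules. -/
structure ASys (L : Logic) where
  AX : Set L.F
  AX_sat : ∃ i, ∀ φ ∈ AX, L.Models i φ
  Rd : Set (Rule L)
  name : Rule L → Option L.F
  rpref : Rule L → Rule L → Prop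
  rpref_refl : ∀ r, rpref r r
  rpref_trans : ∀ r s t, rpref r s → rpref s t → rpref r t
  rpref_total : ∀ r s, rpref r s ∨ rpref s r

/-- Top-rule kinds: axiomatic, consequence-based strict, defeasible. -/
inductive RK : Type
  | ax | cb | df
deriving DecidableEq

/-- Argument trees (with the kind of the top rule and the conclusion recorded). -/
inductive Arg (L : Logic) : Type
  | node (k : RK) (subs : List (Arg L)) (concl : L.F)

def Arg.concl {L : Logic} : Arg L → L.F
  | .node _ _ φ => φ

def Arg.subs {L : Logic} : Arg L → List (Arg L)
  | .node _ s _ => s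

def Arg.kind {L : Logic} : Arg L → RK
  | .node k _ _ => k

/-- Well-formed arguments of an argumentation system. -/
inductive Wf (L : Logic) (as : ASys L) : Arg L → Prop
  | ax (φ : L.F) (h : φ ∈ as.AX) : Wf L as (.node .ax [] φ)
  | cb (subs : List (Arg L)) (φ : L.F) (hs : ∀ a ∈ subs, Wf L as a)
      (h : Conseq L {ψ | ∃ a ∈ subs, Arg.concl a = ψ} φ) : Wf L as (.node .cb subs φ)
  | df (subs : List (Arg L)) (φ : L.F) (hs : ∀ a ∈ subs, Wf L as a)
      (h : (subs.map Arg.concl, φ) ∈ as.Rd) : Wf L as (.node .df subs φ)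

/-- Sub-argument relation: `Sub a b` means a is a sub-argument of b. -/
inductive Sub (L : Logic) : Arg L → Arg L → Prop
  | refl (a : Arg L) : Sub L a a
  | step (a b : Arg L) (k : RK) (subs : List (Arg L)) (φ : L.F)
      (hb : b ∈ subs) (h : Sub L a b) : Sub L a (.node k subs φ)

/-- Conclusions of the sub-arguments of a. -/
def SubC (L : Logic) (a : Arg L) : Set L.F := {φ | ∃ b, Sub L b a ∧ Arg.concl b = φ}

/-- Axiomatic and defeasible sub-arguments. -/
def ADSub (L : Logic) (a : Arg L) : Set (Arg L) := {b | Sub L b a ∧ Arg.kind b ≠ RK.cb}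

/-- Conclusions of the axiomatic and defeasible sub-arguments. -/
def ADSubC (L : Logic) (a : Arg L) : Set L.F :=
  {φ | ∃ b, Sub L b a ∧ Arg.kind b ≠ RK.cb ∧ Arg.concl b = φ}

/-- Defeasible rules used in an argument. -/
def DR (L : Logic) (a : Arg L) : Set (Rule L) :=
  {r | ∃ subs, Sub L (Arg.node RK.df subs r.2) a ∧ r.1 = subs.map Arg.concl}

/-- Strict arguments: no defeasible rules used. -/
def IsStrictArg (L : Logic) (a : Arg L) : Prop := DR L a = ∅

/-- Elitist weakest-link lifting of the rule preorder to arguments (a ⪯_ewl b). -/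
def ewl (L : Logic) (as : ASys L) (a b : Arg L) : Prop :=
  (DR L a = ∅ ∧ DR L b = ∅) ∨ ∃ ra ∈ DR L a, ∀ rb ∈ DR L b, as.rpref ra rb

/-- a undercuts b: the conclusion of a is the negation of the name of a defeasible rule
used in b. -/
def Undercuts (L : Logic) (as : ASys L) (a b : Arg L) : Prop :=
  ∃ subs φ, Sub L (Arg.node RK.df subs φ) b ∧
    ∃ nm, as.name (subs.map Arg.concl, φ) = some nm ∧ negOf L (Arg.concl a) nm

/-- a gen-rebuts b: b is defeasible and the conclusion of a is the negation of a conjunction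
of conclusions of sub-arguments of b. -/
def GenRebuts (L : Logic) (a b : Arg L) : Prop :=
  DR L b ≠ ∅ ∧ ∃ (φ : L.F) (l : List L.F),
    (∀ χ ∈ φ :: l, χ ∈ SubC L b) ∧ Arg.concl a = L.neg (conjL L φ l)

/-- a defeats b: a undercuts b, or a gen-rebuts b and a is not strictly weaker than b. -/
def Defeats (L : Logic) (as : ASys L) (a b : Arg L) : Prop :=
  Undercuts L as a b ∨
    (GenRebuts L a b ∧ ¬ (ewl L as a b ∧ ¬ ewl L as b a))

/-- The strict rules of an argumentation system: axiomatic or consequence-based. -/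
def StrictRule (L : Logic) (as : ASys L) (r : Rule L) : Prop :=
  (r.1 = [] ∧ r.2 ∈ as.AX) ∨ Conseq L {φ | φ ∈ r.1} r.2

end ASPIC

namespace ASPIC

/-- The well-formed arguments of an argumentation system. -/
def WfArg (L : Logic) (as : ASys L) : Type := {a : Arg L // Wf L as a}

/-- The JSBAF corresponding to an argumentation system: attacks are defeats, supports are
applications of strict rules, preferences are the elitist weakest-link lifting. -/
def toJ (L : Logic) (as : ASys L) : JS.JSBAF (WfArg L as) where
  att a b := Defeats L as a.1 b.1
  supp S b := (Arg.kind b.1 = RK.ax ∨ Arg.kind b.1 = RK.cb) ∧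
    S = {a : WfArg L as | a.1 ∈ Arg.subs b.1}
  pref a b := ewl L as a.1 b.1

/-- The conclusions of the IN-arguments of a labeling. -/
def concls (L : Logic) (as : ASys L) (Lb : WfArg L as → JS.Lab) : Set L.F :=
  {φ | ∃ a : WfArg L as, Lb a = JS.Lab.IN ∧ Arg.concl a.1 = φ}

/-- The AS is consistent: no two strict arguments have contradictory conclusions. -/
def ASConsistent (L : Logic) (as : ASys L) : Prop :=
  ¬ ∃ a b : Arg L, Wf L as a ∧ Wf L as b ∧ DR L a = ∅ ∧ DR L b = ∅ ∧
      negOf L (Arg.concl a) (Arg.concl b)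

end ASPIC

namespace ASPIC

variable {L : Logic} {as : ASys L}

/-- List of defeasible rules used in an argument. -/
def drList : Arg L → List (Rule L)
  | .node k subs φ =>
    (if k = RK.df then [(subs.map Arg.concl, φ)] else []) ++
      subs.attach.flatMap (fun x => drList x.1)
decreasing_by
  simp_wf
  have := List.sizeOf_lt_of_mem x.2
  omega

lemma sub_df_mem_drList {x a : Arg L} (h : Sub L x a) :
    ∀ {s : List (Arg L)} {φ : L.F}, x = .node RK.df s φ →
      (s.map Arg.concl, φ) ∈ drList a := by
  induction h with
  | refl =>
      intro s φ he; subst he; simp [drList]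
  | step b k subs φ hb h ih =>
      intro s ψ he
      have hm := ih he
      simp only [drList, List.mem_append, List.mem_flatMap]
      exact Or.inr ⟨⟨b, hb⟩, List.mem_attach _ _, hm⟩

lemma dr_subset_drList {a : Arg L} {r : Rule L} (h : r ∈ DR L a) : r ∈ drList a := by
  obtain ⟨subs, hsub, hr⟩ := h
  have h2 := sub_df_mem_drList hsub rfl
  have hre : r = (subs.map Arg.concl, r.2) := by
    cases r; simp_all
  rw [hre]; exact h2

lemma drList_subset_dr : ∀ (a : Arg L) {r : Rule L}, r ∈ drList a → r ∈ DR L a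
  | .node k subs φ, r, hr => by
    simp only [drList, List.mem_append, List.mem_flatMap] at hr
    rcases hr with h1 | ⟨x, -, hx⟩
    · have hkr : k = RK.df ∧ r = (subs.map Arg.concl, φ) := by
        by_cases hk : k = RK.df <;> simp [hk] at h1
        · exact ⟨hk, h1⟩
      obtain ⟨hk, hre⟩ := hkr; subst hk; subst hre
      exact ⟨subs, Sub.refl _, rfl⟩
    · obtain ⟨s', hsub, hr1⟩ := drList_subset_dr x.1 hx
      exact ⟨s', Sub.step _ x.1 k subs φ x.2 hsub, hr1⟩
termination_by a => sizeOf a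
decreasing_by
  simp_wf
  have := List.sizeOf_lt_of_mem x.2
  omega

end ASPIC

namespace ASPIC

lemma dr_sub_mono {L : Logic} {x : Arg L} {subs : List (Arg L)} {k : RK} {φ : L.F}
    (hx : x ∈ subs) {r : Rule L} (h : r ∈ DR L x) : r ∈ DR L (.node k subs φ) := by
  obtain ⟨s', hsub, hr⟩ := h
  exact ⟨s', Sub.step _ x k subs φ hx hsub, hr⟩

lemma dr_node_decomp {L : Logic} {subs : List (Arg L)} {k : RK} {φ : L.F}
    (hk : k ≠ RK.df) {r : Rule L} (h : r ∈ DR L (.node k subs φ)) :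
    ∃ x ∈ subs, r ∈ DR L x := by
  obtain ⟨s', hsub, hr⟩ := h
  cases hsub with
  | refl => exact absurd rfl hk
  | step b _ _ _ hb hs => exact ⟨b, hb, ⟨s', hs, hr⟩⟩

lemma min_exists {L : Logic} (as : ASys L) :
    ∀ (l : List (Rule L)), l ≠ [] → ∃ r ∈ l, ∀ s ∈ l, as.rpref r s := by
  intro l
  induction l with
  | nil => intro h; exact absurd rfl h
  | cons a t ih =>
    intro _
    cases t with
    | nil =>
      refine ⟨a, List.mem_cons_self, fun s hs => ?_⟩
      simp at hs; subst hs; exact as.rpref_refl _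
    | cons b t' =>
      obtain ⟨m, hm, hmin⟩ := ih (by simp)
      rcases as.rpref_total a m with h | h
      · refine ⟨a, List.mem_cons_self, fun s hs => ?_⟩
        rcases List.mem_cons.mp hs with rfl | hs
        · exact as.rpref_refl _
        · exact as.rpref_trans _ _ _ h (hmin s hs)
      · refine ⟨m, List.mem_cons_of_mem _ hm, fun s hs => ?_⟩
        rcases List.mem_cons.mp hs with rfl | hs
        · exact h
        · exact hmin s hs

lemma strict_of_dr_empty {L : Logic} {as : ASys L} :
    ∀ (a : Arg L) (wf : Wf L as a), DR L a = ∅ → JS.Strict (toJ L as) ⟨a, wf⟩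
  | .node k subs φ, wf, h => by
    have hk : k ≠ RK.df := by
      rintro rfl
      have : (subs.map Arg.concl, φ) ∈ DR L (Arg.node RK.df subs φ) :=
        ⟨subs, Sub.refl _, rfl⟩
      rw [h] at this; exact this
    refine JS.Strict.mk {x : WfArg L as | x.1 ∈ Arg.subs (Arg.node k subs φ)}
      ⟨Arg.node k subs φ, wf⟩ ⟨?_, rfl⟩ ?_
    · cases k with
      | ax => exact Or.inl rfl
      | cb => exact Or.inr rfl
      | df => exact absurd rfl hk
    · intro x hx
      have hxs : x.1 ∈ subs := hx
      have hdr : DR L x.1 = ∅ := by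
        ext r
        simp only [Set.mem_empty_iff_false, iff_false]
        intro hr
        have := dr_sub_mono (k := k) (φ := φ) hxs hr
        rw [h] at this; exact this
      have := strict_of_dr_empty x.1 x.2 hdr
      exact this
termination_by a => sizeOf a
decreasing_by
  simp_wf
  have := List.sizeOf_lt_of_mem hxs
  omega

end ASPIC

open ASPIC in
/-- Every preferred extension of a Deductive ASPIC⊖ argumentation system is closed
under strict rules: if all antecedents of a strict rule are conclusions of IN-arguments, so is
its conclusion. -/
theorem preferred_closed_under_strict_rules (L : Logic) (as : ASys L)
    (Lb : WfArg L as → JS.Lab) (hpr : JS.Preferred (toJ L as) Lb)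
    (prem : List L.F) (ψ : L.F) (hr : StrictRule L as (prem, ψ))
    (hprem : ∀ φ ∈ prem, φ ∈ concls L as Lb) :
    ψ ∈ concls L as Lb := by
  classical
  rcases hr with ⟨hnil, hax⟩ | hcons
  · -- axiomatic rule
    have wfb : Wf L as (.node .ax [] ψ) := Wf.ax ψ hax
    have hdr : DR L (Arg.node RK.ax [] ψ) = ∅ := by
      ext r
      simp only [Set.mem_empty_iff_false, iff_false]
      intro h
      have h2 := dr_subset_drList h
      simp [drList] at h2
    have hstrict := strict_of_dr_empty _ wfb hdr
    exact ⟨⟨_, wfb⟩, hpr.1.2.2 _ hstrict, rfl⟩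
  · -- consequence-based rule
    have hcons' : Conseq L {φ | φ ∈ prem} ψ := hcons
    have hprem' : ∀ x : {φ // φ ∈ prem},
        ∃ a : WfArg L as, Lb a = JS.Lab.IN ∧ Arg.concl a.1 = x.1 :=
      fun x => hprem x.1 x.2
    choose f hf1 hf2 using hprem'
    set subs : List (Arg L) := prem.attach.map (fun x => (f x).1) with hsubs
    have hWfsubs : ∀ a ∈ subs, Wf L as a := by
      intro a ha
      rw [hsubs] at ha
      simp only [List.mem_map] at ha
      obtain ⟨x, -, rfl⟩ := ha
      exact (f x).2
    have hINsubs : ∀ x : WfArg L as, x.1 ∈ subs → Lb x = JS.Lab.IN := by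
      intro x hx
      rw [hsubs] at hx
      simp only [List.mem_map] at hx
      obtain ⟨y, -, hy⟩ := hx
      have : x = f y := Subtype.ext hy.symm
      rw [this]; exact hf1 y
    have hconseq : Conseq L {χ | ∃ a ∈ subs, Arg.concl a = χ} ψ := by
      intro i hi
      apply hcons' i
      intro ρ hρ
      have hmem : (f ⟨ρ, hρ⟩).1 ∈ subs := by
        rw [hsubs]
        exact List.mem_map.mpr ⟨⟨ρ, hρ⟩, List.mem_attach _ _, rfl⟩
      have := hi (Arg.concl (f ⟨ρ, hρ⟩).1) ⟨(f ⟨ρ, hρ⟩).1, hmem, rfl⟩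
      rwa [hf2 ⟨ρ, hρ⟩] at this
    have wfb : Wf L as (.node .cb subs ψ) := Wf.cb subs ψ hWfsubs hconseq
    by_cases hdr : DR L (Arg.node RK.cb subs ψ) = ∅
    · have hstrict := strict_of_dr_empty _ wfb hdr
      exact ⟨⟨_, wfb⟩, hpr.1.2.2 _ hstrict, rfl⟩
    · obtain ⟨r0, hr0⟩ := Set.nonempty_iff_ne_empty.mpr hdr
      have hne : drList (Arg.node RK.cb subs ψ) ≠ [] := by
        intro h0
        have := dr_subset_drList hr0
        rw [h0] at this
        exact List.not_mem_nil this
      obtain ⟨rmin, hrmin_mem, hrmin_min⟩ := min_exists as _ hne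
      have hrminDR := drList_subset_dr _ hrmin_mem
      obtain ⟨a0, ha0s, ha0r⟩ := dr_node_decomp (by decide) hrminDR
      have wfa0 : Wf L as a0 := hWfsubs a0 ha0s
      have hw0IN : Lb ⟨a0, wfa0⟩ = JS.Lab.IN := hINsubs ⟨a0, wfa0⟩ ha0s
      have hleg := hpr.1.1 _ hw0IN
      have hsupp : (toJ L as).supp
          {x : WfArg L as | x.1 ∈ Arg.subs (Arg.node RK.cb subs ψ)} ⟨_, wfb⟩ :=
        ⟨Or.inr rfl, rfl⟩
      have hallIN : ∀ x : WfArg L as,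
          x ∈ {x : WfArg L as | x.1 ∈ Arg.subs (Arg.node RK.cb subs ψ)} →
          Lb x = JS.Lab.IN := fun x hx => hINsubs x hx
      have hpref : ∀ x ∈ {x : WfArg L as | x.1 ∈ Arg.subs (Arg.node RK.cb subs ψ)},
          x ≠ ⟨a0, wfa0⟩ → (toJ L as).pref ⟨a0, wfa0⟩ x := by
        intro x hx _
        exact Or.inr ⟨rmin, ha0r, fun rb hrb =>
          hrmin_min rb (dr_subset_drList (dr_sub_mono hx hrb))⟩
      have hclause := hleg.2 _ ⟨_, wfb⟩ hsupp ha0s hpref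
      rcases hclause with hIN | ⟨-, x, hxS, -, hxlab⟩ |
        ⟨-, ⟨x, hxS, -, hxlab⟩ | ⟨x, hxS, -, -, -, -, -, hxlab, -⟩⟩
      · exact ⟨⟨_, wfb⟩, hIN, rfl⟩
      · have := hallIN x hxS
        rcases hxlab with h | h <;> rw [this] at h <;> cases h
      · have := hallIN x hxS
        rw [this] at hxlab; cases hxlab
      · have := hallIN x hxS
        rw [this] at hxlab; cases hxlab
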